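/- (Filtering limitation with local phase angle measurement — necessity.) Let M > 0, 0 < X₁ < X₂, XΣ = X₁ + X₂, r₁ = 1/(M·X₂), r₂ = 1/(M·X₁), and let ω > 0. For any complex number c (the value F(iω) of a filter at s = iω), define the complementary filtering sensitivities at s = iω by M₁ = c·(X₂/XΣ)·((iω)² + r₁)/(iω)³ and M₂ = −c·(X₁/XΣ)·((iω)² + r₂)/(iω)³, and the filtering sensitivities P₁ = 1 − M₁, P₂ = 1 − M₂. If |P₁| < 1 and |P₂| < 1, then r₁ < ω² < r₂, i.e., ω lies strictly between |q₁| = √r₁ and |q₂| = √r₂. -/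

import Mathlib

lemma aux_re_pos (M : ℂ) (h : ‖1 - M‖ < 1) : 0 < M.re := by
  have h2 : ‖1 - M‖ ^ 2 < 1 := by
    nlinarith [norm_nonneg (1 - M)]
  rw [Complex.sq_norm, Complex.normSq_apply] at h2
  simp only [Complex.sub_re, Complex.sub_im, Complex.one_re, Complex.one_im] at h2
  nlinarith [sq_nonneg M.im, sq_nonneg M.re]


lemma mul3_sign_a {a b y : ℝ} (ha : 0 < a) (hy : y < 0) (h : a * b * y < 0) : 0 < b := by
  by_contra hb; push_neg at hb
  nlinarith [mul_nonneg (neg_nonneg.mpr (mul_nonpos_of_nonneg_of_nonpos ha.le hy.le)) (neg_nonneg.mpr hb)]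

lemma mul3_sign_b {a b y : ℝ} (ha : 0 < a) (hy : y < 0) (h : 0 < a * b * y) : b < 0 := by
  by_contra hb; push_neg at hb
  nlinarith [mul_nonneg (mul_nonneg ha.le hb) (neg_nonneg.mpr hy.le)]

lemma mul3_sign_c {a b y : ℝ} (ha : 0 < a) (hy : 0 < y) (h : a * b * y < 0) : b < 0 := by
  by_contra hb; push_neg at hb
  nlinarith [mul_nonneg (mul_nonneg ha.le hb) hy.le]

lemma mul3_sign_d {a b y : ℝ} (ha : 0 < a) (hy : 0 < y) (h : 0 < a * b * y) : 0 < b := by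
  by_contra hb; push_neg at hb
  nlinarith [mul_nonneg (neg_nonneg.mpr (mul_nonpos_of_nonneg_of_nonpos ha.le hb)) hy.le]

theorem local_phase_filtering_limitation_necessity
    (M X₁ X₂ Xs r₁ r₂ : ℝ) (hM : 0 < M) (hX₁ : 0 < X₁) (hX₁₂ : X₁ < X₂)
    (hXs : Xs = X₁ + X₂) (hr₁ : r₁ = 1 / (M * X₂)) (hr₂ : r₂ = 1 / (M * X₁))
    (ω : ℝ) (hω : 0 < ω) (c : ℂ)
    (M₁ M₂ P₁ P₂ : ℂ)
    (hM₁ : M₁ = c * ((X₂ : ℂ) / (Xs : ℂ)) * ((Complex.I * ω) ^ 2 + (r₁ : ℂ)) / (Complex.I * ω) ^ 3)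
    (hM₂ : M₂ = -(c * ((X₁ : ℂ) / (Xs : ℂ)) * ((Complex.I * ω) ^ 2 + (r₂ : ℂ)) / (Complex.I * ω) ^ 3))
    (hP₁ : P₁ = 1 - M₁) (hP₂ : P₂ = 1 - M₂)
    (h1 : ‖P₁‖ < 1) (h2 : ‖P₂‖ < 1) :
    r₁ < ω ^ 2 ∧ ω ^ 2 < r₂ := by
  have hX₂ : 0 < X₂ := lt_trans hX₁ hX₁₂
  have hXs0 : (0:ℝ) < Xs := by rw [hXs]; linarith
  have hωC : (ω:ℂ) ≠ 0 := Complex.ofReal_ne_zero.mpr hω.ne'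
  have hXsC : (Xs:ℂ) ≠ 0 := Complex.ofReal_ne_zero.mpr hXs0.ne'
  set k₁ : ℝ := X₂ / Xs * (r₁ - ω^2) / ω^3 with hk₁
  set k₂ : ℝ := X₁ / Xs * (r₂ - ω^2) / ω^3 with hk₂
  have e₁ : M₁ = Complex.I * (k₁ : ℂ) * c := by
    rw [hM₁, hk₁]
    push_cast
    field_simp
    ring_nf
    simp [Complex.I_sq]
  have e₂ : M₂ = -(Complex.I * (k₂ : ℂ) * c) := by
    rw [hM₂, hk₂]
    push_cast
    field_simp
    ring_nf
    simp [Complex.I_sq]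
  have hre1 : 0 < M₁.re := aux_re_pos _ (hP₁ ▸ h1)
  have hre2 : 0 < M₂.re := aux_re_pos _ (hP₂ ▸ h2)
  rw [e₁] at hre1
  rw [e₂] at hre2
  simp [Complex.mul_re, Complex.mul_im] at hre1 hre2
  -- hre1 : 0 < -(k₁ * c.im), hre2 : 0 < k₂ * c.im (roughly)
  have hω3 : 0 < ω^3 := by positivity
  have hr12 : r₁ < r₂ := by
    rw [hr₁, hr₂]
    apply div_lt_div_of_pos_left one_pos (by positivity)
    exact (mul_lt_mul_iff_right₀ hM).mpr hX₁₂
  have hk₁' : k₁ = X₂ / (Xs * ω^3) * (r₁ - ω^2) := by rw [hk₁]; ring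
  have hk₂' : k₂ = X₁ / (Xs * ω^3) * (r₂ - ω^2) := by rw [hk₂]; ring
  have hc₁ : 0 < X₂ / (Xs * ω^3) := by positivity
  have hc₂ : 0 < X₁ / (Xs * ω^3) := by positivity
  rw [hk₁'] at hre1
  rw [hk₂'] at hre2
  rcases lt_trichotomy c.im 0 with him | him | him
  · exfalso
    have hA : 0 < r₁ - ω^2 := mul3_sign_a hc₁ him hre1
    have hB : r₂ - ω^2 < 0 := mul3_sign_b hc₂ him hre2
    linarith
  · exfalso; rw [him] at hre1; simp at hre1
  · have hA : r₁ - ω^2 < 0 := mul3_sign_c hc₁ him hre1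
    have hB : 0 < r₂ - ω^2 := mul3_sign_d hc₂ him hre2
    constructor <;> linarith
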